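/- Fix n ≥ 2 and m ≥ 1, and consider the maximal Dyck path D_{m+1} with horizontal edges H_{m+1} (of cardinality u_{m+1}) and vertical edges V_{m+1} (of cardinality u_m). Then the pair (S_H, S_V) = (H_{m+1}, ∅) and the pair (∅, V_{m+1}) are both compatible pairs, while (H_{m+1}, V_{m+1}) is not compatible whenever m ≥ 1 (i.e. whenever both H_{m+1} and V_{m+1} are nonempty). -/

import Mathlib

/-- The Chebyshev-like numbers `u 0 = 0`, `u 1 = 1`, `u (k+2) = n * u (k+1) - u k`. -/
def kron (n : ℕ) : ℕ → ℤ
  | 0 => 0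
  | 1 => 1
  | k + 2 => n * kron n (k + 1) - kron n k

/-- The maximal Dyck path `D_m`, as a word in the alphabet `Bool`
(`true` = horizontal step, `false` = vertical step). -/
def Dyck (n : ℕ) : ℕ → List Bool
  | 0 => []
  | 1 => [true]
  | 2 => List.replicate n true ++ [false]
  | m + 3 => List.flatten (List.replicate (n - 1) (Dyck n (m + 2))) ++
      (Dyck n (m + 2)).drop (Dyck n (m + 1)).length

def uu (n : ℕ) : ℕ → ℕ
  | 0 => 0
  | 1 => 1
  | k + 2 => n * uu n (k + 1) - uu n k


namespace Stmt17
variable {n : ℕ}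

lemma uu_zero : uu n 0 = 0 := rfl
lemma uu_one : uu n 1 = 1 := rfl
lemma uu_two (hn : 2 ≤ n) : uu n 2 = n := by
  show n * uu n 1 - uu n 0 = n; simp [uu_one, uu_zero]

lemma uu_lt_succ (hn : 2 ≤ n) : ∀ k, uu n k < uu n (k + 1) := by
  intro k
  induction k with
  | zero => simp [uu_zero, uu_one]
  | succ k ih =>
    show uu n (k+1) < n * uu n (k+1) - uu n k
    have h2 : 2 * uu n (k+1) ≤ n * uu n (k+1) := Nat.mul_le_mul_right _ hn
    omega

lemma uu_rec (hn : 2 ≤ n) (k : ℕ) : uu n (k + 2) + uu n k = n * uu n (k + 1) := by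
  have h := uu_lt_succ hn k
  have h2 : 2 * uu n (k+1) ≤ n * uu n (k+1) := Nat.mul_le_mul_right _ hn
  show n * uu n (k+1) - uu n k + uu n k = n * uu n (k+1)
  omega

lemma uu_pos (hn : 2 ≤ n) (k : ℕ) : 1 ≤ uu n (k + 1) := by
  induction k with
  | zero => simp [uu_one]
  | succ k ih => have := uu_lt_succ hn (k+1); omega

/-- `(n-1) * u_k < u_{k+1}` -/
lemma uu_mul_lt (hn : 2 ≤ n) (k : ℕ) : (n - 1) * uu n k < uu n (k + 1) := by
  cases k with
  | zero => simp [uu_zero, uu_one]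
  | succ k =>
    show (n - 1) * uu n (k+1) < uu n (k+2)
    have hr := uu_rec hn k
    have hlt := uu_lt_succ hn k
    obtain ⟨p, rfl⟩ : ∃ p, n = p + 2 := ⟨n - 2, by omega⟩
    have key : (p + 2 - 1) * uu (p+2) (k+1) + uu (p+2) (k+1) = (p+2) * uu (p+2) (k+1) := by
      have h1 : p + 2 - 1 = p + 1 := rfl
      rw [h1]; ring
    omega


lemma pred_mul (hn : 2 ≤ n) (x : ℕ) : (n - 1) * x + x = n * x := by
  have h : n - 1 + 1 = n := by omega
  calc (n-1)*x + x = (n-1+1)*x := by ring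
    _ = n*x := by rw [h]

lemma flat_succ (j : ℕ) (w : List Bool) :
    List.flatten (List.replicate (j+1) w) = w ++ List.flatten (List.replicate j w) := by
  simp [List.replicate_succ]

lemma flat_count (c : Bool) (j : ℕ) (w : List Bool) :
    (List.flatten (List.replicate j w)).count c = j * w.count c := by
  induction j with
  | zero => simp
  | succ j ih => rw [flat_succ, List.count_append, ih]; ring

lemma flat_length (j : ℕ) (w : List Bool) :
    (List.flatten (List.replicate j w)).length = j * w.length := by
  induction j with
  | zero => simp
  | succ j ih => rw [flat_succ, List.length_append, ih]; ring

lemma cTF (l : List Bool) : l.count true + l.count false = l.length := by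
  induction l with
  | nil => simp
  | cons a l ih => cases a <;> simp [List.count_cons] <;> omega

lemma dyck_one : Dyck n 1 = [true] := rfl
lemma dyck_two : Dyck n 2 = List.replicate n true ++ [false] := rfl
lemma dyck_three (hn : 2 ≤ n) (m : ℕ) :
    Dyck n (m+3) = Dyck n (m+2) ++ (List.flatten (List.replicate (n-2) (Dyck n (m+2))) ++
      (Dyck n (m+2)).drop (Dyck n (m+1)).length) := by
  show List.flatten (List.replicate (n - 1) (Dyck n (m + 2))) ++
      (Dyck n (m + 2)).drop (Dyck n (m + 1)).length = _
  have h : n - 1 = (n - 2) + 1 := by omega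
  rw [h, flat_succ, List.append_assoc]

lemma dyck_take (hn : 2 ≤ n) : ∀ k, 1 ≤ k →
    List.take (Dyck n k).length (Dyck n (k+1)) = Dyck n k := by
  intro k hk
  match k, hk with
  | 1, _ =>
    have h : Dyck n 2 = true :: (List.replicate (n-1) true ++ [false]) := by
      rw [dyck_two]
      have : n = (n - 1) + 1 := by omega
      rw [this, List.replicate_succ]
      simp
    rw [h, dyck_one]
    simp
  | (m+2), _ =>
    rw [dyck_three hn m, List.take_left]

lemma dyck_counts (hn : 2 ≤ n) : ∀ k,
    (Dyck n (k+1)).count true = uu n (k+1) ∧ (Dyck n (k+1)).count false = uu n k := by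
  intro k
  induction k using Nat.strong_induction_on with
  | _ k ih =>
    match k with
    | 0 => simp [dyck_one]; constructor <;> rfl
    | 1 =>
      rw [dyck_two]
      have h2 : uu n 2 = n := by show n * uu n 1 - uu n 0 = n; simp [uu]
      simp [List.count_append, List.count_replicate, h2, uu]
    | (m+2) =>
      obtain ⟨ht1, hf1⟩ : (Dyck n (m+1)).count true = uu n (m+1) ∧
          (Dyck n (m+1)).count false = uu n m := ih m (by omega)
      obtain ⟨ht2, hf2⟩ : (Dyck n (m+2)).count true = uu n (m+2) ∧
          (Dyck n (m+2)).count false = uu n (m+1) := ih (m+1) (by omega)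
      have hsplit : ∀ c : Bool, (Dyck n (m+2)).count c
          = (Dyck n (m+1)).count c + ((Dyck n (m+2)).drop (Dyck n (m+1)).length).count c := by
        intro c
        conv_lhs => rw [← List.take_append_drop (Dyck n (m+1)).length (Dyck n (m+2))]
        rw [List.count_append, dyck_take hn (m+1) (by omega)]
      have h3 : Dyck n (m+3) = List.flatten (List.replicate (n-1) (Dyck n (m+2))) ++
          (Dyck n (m+2)).drop (Dyck n (m+1)).length := rfl
      have hA := hsplit true
      have hB := hsplit false
      have e1 : (Dyck n (m+3)).count true = (n-1) * uu n (m+2)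
          + ((Dyck n (m+2)).drop (Dyck n (m+1)).length).count true := by
        rw [h3, List.count_append, flat_count, ht2]
      have e2 : (Dyck n (m+3)).count false = (n-1) * uu n (m+1)
          + ((Dyck n (m+2)).drop (Dyck n (m+1)).length).count false := by
        rw [h3, List.count_append, flat_count, hf2]
      have r1 : uu n (m+3) + uu n (m+1) = n * uu n (m+2) := uu_rec hn (m+1)
      have r2 := uu_rec hn m
      have p1 := pred_mul hn (uu n (m+2))
      have p2 := pred_mul hn (uu n (m+1))
      have g1 : (Dyck n (m+3)).count true = uu n (m+3) := by
        rw [ht2] at hA; rw [ht1] at hA; omega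
      have g2 : (Dyck n (m+3)).count false = uu n (m+2) := by
        rw [hf2] at hB; rw [hf1] at hB; omega
      exact ⟨g1, g2⟩

lemma dyck_length (hn : 2 ≤ n) (k : ℕ) :
    (Dyck n (k+1)).length = uu n (k+1) + uu n k := by
  rw [← cTF, (dyck_counts hn k).1, (dyck_counts hn k).2]

/-- the no-two-consecutive-falses relation -/
abbrev RFF : Bool → Bool → Prop := fun a b => a = true ∨ b = true

lemma dyck_head (hn : 2 ≤ n) : ∀ k, (Dyck n (k+1)).head? = some true := by
  intro k
  induction k using Nat.strong_induction_on with
  | _ k ih =>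
    match k with
    | 0 => rfl
    | 1 =>
      rw [dyck_two]
      have h : n = (n-1)+1 := by omega
      rw [h, List.replicate_succ]
      rfl
    | (m+2) =>
      rw [dyck_three hn m, List.head?_append, ih (m+1) (by omega)]
      rfl

lemma dyck_last (hn : 2 ≤ n) : ∀ k, (Dyck n (k+2)).getLast? = some false := by
  intro k
  induction k using Nat.strong_induction_on with
  | _ k ih =>
    match k with
    | 0 =>
      rw [dyck_two, List.getLast?_append]
      rfl
    | (m+1) =>
      have hw : (Dyck n (m+2)).getLast? = some false := ih m (by omega)
      set w := Dyck n (m+2) with hwdef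
      set t := w.drop (Dyck n (m+1)).length with htdef
      have htne : t ≠ [] := by
        have h1 : w.length = uu n (m+2) + uu n (m+1) := dyck_length hn (m+1)
        have h2 : (Dyck n (m+1)).length = uu n (m+1) + uu n m := dyck_length hn m
        have h3 : uu n m < uu n (m+1) := uu_lt_succ hn m
        have h4 : uu n (m+1) < uu n (m+2) := uu_lt_succ hn (m+1)
        have : t.length = w.length - (Dyck n (m+1)).length := by
          rw [htdef, List.length_drop]
        intro hc
        rw [hc] at this
        simp at this
        omega
      have htl : t.getLast? = some false := by
        have hsplit : w = w.take (Dyck n (m+1)).length ++ t := (List.take_append_drop _ _).symm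
        rw [hsplit, List.getLast?_append] at hw
        obtain ⟨a, ha⟩ := Option.isSome_iff_exists.mp (List.getLast?_isSome.mpr htne)
        rw [ha] at hw ⊢
        simpa using hw
      have h5 : Dyck n (m+3) = List.flatten (List.replicate (n-1) w) ++ t := rfl
      rw [h5, List.getLast?_append, htl]
      rfl

lemma dyck_tail_head (hn : 2 ≤ n) : ∀ k,
    ((Dyck n (k+2)).drop (Dyck n (k+1)).length).head? = some true := by
  intro k
  induction k using Nat.strong_induction_on with
  | _ k ih =>
    match k with
    | 0 =>
      rw [dyck_two, dyck_one]
      have h : n = (n-1)+1 := by omega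
      rw [h, List.replicate_succ]
      show (List.replicate (n-1) true ++ [false]).head? = some true
      have h2 : n - 1 = (n-2)+1 := by omega
      rw [h2, List.replicate_succ]
      rfl
    | (m+1) =>
      have h5 : Dyck n (m+3) = Dyck n (m+2) ++ (List.flatten (List.replicate (n-2) (Dyck n (m+2))) ++
          (Dyck n (m+2)).drop (Dyck n (m+1)).length) := dyck_three hn m
      have hlen : (Dyck n (m+2+1)).drop (Dyck n (m+1+1)).length
          = List.flatten (List.replicate (n-2) (Dyck n (m+2))) ++
            (Dyck n (m+2)).drop (Dyck n (m+1)).length := by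
        rw [show (m+2+1) = m+3 from rfl, h5, List.drop_left]
      rw [hlen]
      rcases Nat.lt_or_ge n 3 with h3 | h3
      · have : n - 2 = 0 := by omega
        rw [this]
        simpa using ih m (by omega)
      · have : n - 2 = (n-3)+1 := by omega
        rw [this, flat_succ, List.append_assoc, List.head?_append, dyck_head hn (m+1)]
        rfl

lemma chain_flat (w : List Bool) (hc : List.Chain' RFF w) (hh : w.head? = some true) :
    ∀ j, List.Chain' RFF (List.flatten (List.replicate j w)) := by
  intro j
  induction j with
  | zero => simp [List.Chain']
  | succ j ihj =>
    rw [flat_succ, List.Chain', List.isChain_append]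
    refine ⟨hc, ihj, ?_⟩
    intro x hx y hy
    right
    cases j with
    | zero => simp at hy
    | succ j' =>
      rw [flat_succ, List.head?_append, hh] at hy
      simpa using hy.symm

lemma chain_replicate_true : ∀ p, List.Chain' RFF (List.replicate p true) := by
  intro p
  induction p with
  | zero => simp [List.Chain']
  | succ p ihp =>
    rw [List.replicate_succ, List.Chain', List.isChain_cons]
    exact ⟨fun y _ => Or.inl rfl, ihp⟩

lemma dyck_chain (hn : 2 ≤ n) : ∀ k, List.Chain' RFF (Dyck n (k+1)) := by
  intro k
  induction k using Nat.strong_induction_on with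
  | _ k ih =>
    match k with
    | 0 => simp [dyck_one, List.Chain']
    | 1 =>
      rw [dyck_two, List.Chain', List.isChain_append]
      refine ⟨?_, by simp, ?_⟩
      · exact chain_replicate_true n
      · intro x hx y hy
        left
        exact List.eq_of_mem_replicate (List.mem_of_mem_getLast? hx)
    | (m+2) =>
      have hcw : List.Chain' RFF (Dyck n (m+2)) := ih (m+1) (by omega)
      have h5 : Dyck n (m+2+1) = List.flatten (List.replicate (n-1) (Dyck n (m+2))) ++
          (Dyck n (m+2)).drop (Dyck n (m+1)).length := rfl
      rw [h5, List.Chain', List.isChain_append]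
      refine ⟨chain_flat _ hcw (dyck_head hn (m+1)) _, ?_, ?_⟩
      · have hsplit : Dyck n (m+2) = (Dyck n (m+2)).take (Dyck n (m+1)).length ++
            (Dyck n (m+2)).drop (Dyck n (m+1)).length := (List.take_append_drop _ _).symm
        rw [hsplit] at hcw
        exact (List.isChain_append.mp hcw).2.1
      · intro x hx y hy
        right
        rw [dyck_tail_head hn m] at hy
        simpa using hy.symm

lemma chain_count : ∀ (N : ℕ) (l : List Bool), l.length ≤ N → List.Chain' RFF l →
    (l.head? = some true ∨ l = []) → l.count false ≤ l.count true := by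
  intro N
  induction N with
  | zero =>
    intro l hl _ _
    have : l = [] := List.eq_nil_of_length_eq_zero (by omega)
    simp [this]
  | succ N ihN =>
    intro l hl hc hh
    match l with
    | [] => simp
    | a :: r =>
      have ha : a = true := by
        rcases hh with hh | hh
        · simpa using hh
        · simp at hh
      subst ha
      match r with
      | [] => simp
      | true :: r' =>
        have := ihN (true :: r') (by simp at hl ⊢; omega) hc.tail (Or.inl rfl)
        simp [List.count_cons] at this ⊢
        omega
      | false :: r' =>
        have hc2 : List.Chain' RFF (false :: r') := hc.tail
        have hr' : r'.head? = some true ∨ r' = [] := by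
          match r' with
          | [] => exact Or.inr rfl
          | b :: r'' =>
            left
            rw [List.Chain', List.isChain_cons] at hc2
            have := hc2.1 b rfl
            rcases this with h | h
            · simp at h
            · simp [h]
        have hlen : r'.length ≤ N := by simp at hl; omega
        have hcr' : List.Chain' RFF r' := hc2.tail
        have := ihN r' hlen hcr' hr'
        simp [List.count_cons]
        omega

lemma dyck_P (hn : 2 ≤ n) : ∀ m e, 0 < e → e < (Dyck n (m+2)).length →
    n * ((Dyck n (m+2)).take e).count false < ((Dyck n (m+2)).take e).count true + uu n m := by
  intro m
  induction m with
  | zero =>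
    intro e he hel
    rw [show Dyck n (0+2) = Dyck n 2 from rfl] at hel ⊢
    have hlen : (Dyck n 2).length = n + 1 := by
      rw [dyck_two]; simp
    have htk : (Dyck n 2).take e = List.replicate e true := by
      rw [dyck_two, List.take_append, List.take_replicate]
      have h1 : min e n = e := by omega
      have h2 : e - (List.replicate n true).length = 0 := by simp; omega
      rw [h1, h2]
      simp
    rw [htk]
    simp [List.count_replicate]
    omega
  | succ m IH =>
    intro e he hel
    rw [show Dyck n (m+1+2) = Dyck n (m+3) from rfl] at hel ⊢
    set w := Dyck n (m+2) with hw
    set ℓ := (Dyck n (m+1)).length with hℓ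
    set t := w.drop ℓ with ht
    have hwT : w.count true = uu n (m+2) := (dyck_counts hn (m+1)).1
    have hwF : w.count false = uu n (m+1) := (dyck_counts hn (m+1)).2
    have hDT : (Dyck n (m+1)).count true = uu n (m+1) := (dyck_counts hn m).1
    have hDF : (Dyck n (m+1)).count false = uu n m := (dyck_counts hn m).2
    have hℓlen : ℓ = uu n (m+1) + uu n m := dyck_length hn m
    have hwlen : w.length = uu n (m+2) + uu n (m+1) := dyck_length hn (m+1)
    have htlen : t.length = w.length - ℓ := by rw [ht, List.length_drop]
    have htake : ∀ e', w.take (ℓ + e') = Dyck n (m+1) ++ t.take e' := by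
      intro e'
      have h1 : w.take ℓ = Dyck n (m+1) := by
        rw [hℓ, hw]; exact dyck_take hn (m+1) (by omega)
      rw [List.take_add, h1, ← ht]
    have hrec : uu n (m+2) + uu n m = n * uu n (m+1) := uu_rec hn m
    have hmul : (n-1) * uu n m < uu n (m+1) := uu_mul_lt hn m
    have G : ∀ j, j ≤ n - 1 → ∀ e', 0 < e' → e' < j * w.length + t.length →
        n * ((List.flatten (List.replicate j w) ++ t).take e').count false + (n - 1 - j) * uu n m
          < ((List.flatten (List.replicate j w) ++ t).take e').count true + uu n (m+1) := by
      intro j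
      induction j with
      | zero =>
        intro _ e' he' hel'
        simp only [List.replicate_zero, List.flatten_nil, List.nil_append, Nat.zero_mul,
          Nat.zero_add, Nat.sub_zero] at hel' ⊢
        have hin : ℓ + e' < w.length := by omega
        have hIH := IH (ℓ + e') (by omega) hin
        rw [htake e', List.count_append, List.count_append, hDT, hDF] at hIH
        have hexp : n * (uu n m + (t.take e').count false)
            = n * uu n m + n * (t.take e').count false := by ring
        rw [hexp] at hIH
        have hpm : (n-1) * uu n m + uu n m = n * uu n m := pred_mul hn _
        omega
      | succ j ihj =>
        intro hj e' he' hel'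
        have hjn : j ≤ n - 1 := by omega
        have hW : List.flatten (List.replicate (j+1) w) ++ t
            = w ++ (List.flatten (List.replicate j w) ++ t) := by
          rw [flat_succ, List.append_assoc]
        rw [hW]
        rw [List.take_append, List.count_append, List.count_append]
        have c1 : (n-1-(j+1)) * uu n m + uu n m ≤ (n-1) * uu n m := by
          have h := Nat.mul_le_mul_right (uu n m) (show (n-1-(j+1))+1 ≤ n-1 by omega)
          calc (n-1-(j+1)) * uu n m + uu n m = ((n-1-(j+1))+1) * uu n m := by ring
            _ ≤ (n-1) * uu n m := h
        rcases Nat.lt_or_ge e' w.length with hcase | hcase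
        · have hz : e' - w.length = 0 := by omega
          rw [hz, List.take_zero]
          simp only [List.count_nil, Nat.add_zero]
          have hIH := IH e' he' hcase
          omega
        · rcases Nat.eq_or_lt_of_le hcase with hcase2 | hcase2
          · have hz : e' - w.length = 0 := by omega
            rw [hz, List.take_zero]
            simp only [List.count_nil, Nat.add_zero]
            have htk : w.take e' = w := by
              rw [← hcase2, List.take_length]
            rw [htk, hwT, hwF]
            omega
          · have htk : w.take e' = w := List.take_of_length_le (by omega)
            rw [htk, hwT, hwF]
            set e'' := e' - w.length with he''
            have he''pos : 0 < e'' := by omega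
            have he''lt : e'' < j * w.length + t.length := by
              have : (j+1) * w.length = j * w.length + w.length := by ring
              omega
            have hG := ihj hjn e'' he''pos he''lt
            have c3 : (n-1-(j+1)) * uu n m + uu n m = (n-1-j) * uu n m := by
              have hco : (n-1-(j+1))+1 = n-1-j := by omega
              calc (n-1-(j+1)) * uu n m + uu n m = ((n-1-(j+1))+1) * uu n m := by ring
                _ = (n-1-j) * uu n m := by rw [hco]
            have hexp : n * (uu n (m+1) + ((List.flatten (List.replicate j w) ++ t).take e'').count false)
                = n * uu n (m+1) + n * ((List.flatten (List.replicate j w) ++ t).take e'').count false := by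
              ring
            omega
    have hD3 : Dyck n (m+3) = List.flatten (List.replicate (n-1) w) ++ t := rfl
    have hD3len : (Dyck n (m+3)).length = (n-1) * w.length + t.length := by
      rw [hD3, List.length_append, flat_length]
    have hfin := G (n-1) le_rfl e he (by rw [← hD3len]; exact hel)
    have hz : n - 1 - (n - 1) = 0 := by omega
    rw [hz, Nat.zero_mul, Nat.add_zero] at hfin
    rw [hD3]
    exact hfin

lemma sum_count (l : List Bool) (c d : Bool) : ∀ f, f ≤ l.length →
    (∑ i ∈ Finset.range f, if l.getD i d = c then 1 else 0) = (l.take f).count c := by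
  intro f
  induction f with
  | zero => simp
  | succ f ihf =>
    intro hf
    have hf' : f < l.length := by omega
    have hgd : l.getD f d = l[f] := by
      rw [List.getD_eq_getElem?_getD, List.getElem?_eq_getElem hf']
      rfl
    rw [Finset.sum_range_succ, ihf (by omega), List.take_succ,
      List.getElem?_eq_getElem hf']
    rw [List.count_append, hgd]
    have : List.count c [l[f]] = if l[f] = c then 1 else 0 := by
      cases c <;> cases hv : l[f] <;> simp
    simp [Option.toList, this]

lemma card_filter_lt (l : List Bool) (c d : Bool) (f : ℕ) (hf : f ≤ l.length) :
    ((Finset.range l.length).filter (fun i => l.getD i d = c ∧ i < f)).card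
      = (l.take f).count c := by
  rw [Finset.card_filter]
  rw [← Finset.sum_subset (Finset.range_subset_range.mpr hf) (fun x _ hnx => by
    simp only [Finset.mem_range, not_lt] at hnx
    rw [if_neg]
    rintro ⟨-, h2⟩
    omega)]
  rw [← sum_count l c d f hf]
  refine Finset.sum_congr rfl (fun x hx => ?_)
  simp only [Finset.mem_range] at hx
  simp [hx]

lemma card_filter_all (l : List Bool) (c d : Bool) :
    ((Finset.range l.length).filter (fun i => l.getD i d = c)).card = l.count c := by
  have h := card_filter_lt l c d l.length le_rfl
  rw [List.take_length] at h
  rw [← h]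
  congr 1
  refine Finset.filter_congr (fun x hx => ?_)
  simp only [Finset.mem_range] at hx
  simp [hx]

lemma card_filter_ge (l : List Bool) (c d : Bool) (f : ℕ) (hf : f ≤ l.length) :
    ((Finset.range l.length).filter (fun i => l.getD i d = c ∧ f ≤ i)).card
      + (l.take f).count c = l.count c := by
  rw [← card_filter_lt l c d f hf, ← card_filter_all l c d]
  rw [Finset.card_filter, Finset.card_filter, Finset.card_filter, ← Finset.sum_add_distrib]
  refine Finset.sum_congr rfl (fun i _ => ?_)
  by_cases h1 : l.getD i d = c
  · by_cases h2 : f ≤ i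
    · have h3 : ¬ i < f := by omega
      simp [h1, h2, h3]
    · have h3 : i < f := by omega
      simp [h1, h2, h3]
  · rw [if_neg (fun h => h1 h.1), if_neg (fun h => h1 h.1), if_neg h1]

end Stmt17

/-- The subpath of `l` from edge `a` to edge `b` (inclusive). -/
def seg (l : List Bool) (a b : ℕ) : List Bool := (l.drop a).take (b + 1 - a)

/-- The set of horizontal edges (indices) of the path `l`. -/
def Hset (l : List Bool) : Finset ℕ :=
  (Finset.range l.length).filter (fun i => l.getD i false = true)

/-- The set of vertical edges (indices) of the path `l`. -/
def Vset (l : List Bool) : Finset ℕ :=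
  (Finset.range l.length).filter (fun i => l.getD i true = false)

/-- A pair `(SH, SV)` of sets of horizontal resp. vertical edges of the path `l` is
compatible if for every `h ∈ SH`, `v ∈ SV` with `h` preceding `v` there is an edge `e`
on the subpath from `h` to `v` with either (`e ≠ v` and the number of vertical edges of
the subpath `h..e` equals `n` times `|h..e ∩ SH|`) or (`e ≠ h` and the number of
horizontal edges of the subpath `e..v` equals `n` times `|e..v ∩ SV|`). -/
def Compatible (n : ℕ) (l : List Bool) (SH SV : Finset ℕ) : Prop :=
  ∀ h ∈ SH, ∀ v ∈ SV, h < v →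
    ∃ e, h ≤ e ∧ e ≤ v ∧
      ((e ≠ v ∧ (seg l h e).count false
          = n * ((SH.filter (fun i => h ≤ i ∧ i ≤ e)).card)) ∨
       (e ≠ h ∧ (seg l e v).count true
          = n * ((SV.filter (fun i => e ≤ i ∧ i ≤ v)).card)))

/-- on the maximal Dyck path `D_{m+1}`, the pairs `(H_{m+1}, ∅)` and
`(∅, V_{m+1})` are compatible, while `(H_{m+1}, V_{m+1})` is not compatible (for `m ≥ 1`). -/
theorem stmt_17 (n m : ℕ) (hn : 2 ≤ n) (hm : 1 ≤ m) :
    Compatible n (Dyck n (m + 1)) (Hset (Dyck n (m + 1))) ∅ ∧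
    Compatible n (Dyck n (m + 1)) ∅ (Vset (Dyck n (m + 1))) ∧
    ¬ Compatible n (Dyck n (m + 1)) (Hset (Dyck n (m + 1))) (Vset (Dyck n (m + 1))) := by
  refine ⟨fun h hh v hv => absurd hv (Finset.notMem_empty v),
          fun h hh => absurd hh (Finset.notMem_empty h), ?_⟩
  intro hcomp
  obtain ⟨M, rfl⟩ : ∃ M, m = M + 1 := ⟨m - 1, by omega⟩
  set l := Dyck n (M + 1 + 1) with hl
  have hl2 : l = Dyck n (M + 2) := rfl
  -- basic facts
  have hcT : l.count true = uu n (M+2) := (Stmt17.dyck_counts hn (M+1)).1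
  have hcF : l.count false = uu n (M+1) := (Stmt17.dyck_counts hn (M+1)).2
  have hLen : l.length = uu n (M+2) + uu n (M+1) := Stmt17.dyck_length hn (M+1)
  have hu1 : 1 ≤ uu n (M+1) := Stmt17.uu_pos hn M
  have hu2 : uu n (M+1) < uu n (M+2) := Stmt17.uu_lt_succ hn (M+1)
  have hL3 : 3 ≤ l.length := by omega
  -- head and last membership
  have hhead : l.head? = some true := Stmt17.dyck_head hn (M+1)
  obtain ⟨r, hr⟩ : ∃ r, l = true :: r := by
    cases hc : l with
    | nil => rw [hc] at hhead; cases hhead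
    | cons a r =>
      rw [hc] at hhead
      simp at hhead
      exact ⟨r, by rw [hhead]⟩
  have h0H : 0 ∈ Hset l := by
    rw [Hset, Finset.mem_filter, Finset.mem_range]
    refine ⟨by omega, ?_⟩
    rw [hr]
    rfl
  have hlast : l.getLast? = some false := Stmt17.dyck_last hn M
  have hlastV : l.length - 1 ∈ Vset l := by
    rw [Vset, Finset.mem_filter, Finset.mem_range]
    refine ⟨by omega, ?_⟩
    rw [List.getLast?_eq_getElem?] at hlast
    rw [List.getD_eq_getElem?_getD, hlast]
    rfl
  obtain ⟨e, he0, heL, hor⟩ := hcomp 0 h0H (l.length - 1) hlastV (by omega)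
  rcases hor with ⟨hne, heq⟩ | ⟨hne, heq⟩
  · -- horizontal-side count fails
    have hseg : seg l 0 e = l.take (e+1) := by
      simp [seg]
    have hcard : ((Hset l).filter (fun i => 0 ≤ i ∧ i ≤ e)).card
        = (l.take (e+1)).count true := by
      rw [Hset, Finset.filter_filter]
      rw [← Stmt17.card_filter_lt l true false (e+1) (by omega)]
      congr 1
      refine Finset.filter_congr (fun x hx => ?_)
      simp only [Finset.mem_range] at hx
      constructor
      · rintro ⟨h1, -, h3⟩; exact ⟨h1, by omega⟩
      · rintro ⟨h1, h2⟩; exact ⟨h1, by omega, by omega⟩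
    rw [hseg, hcard] at heq
    -- now heq : (l.take (e+1)).count false = n * (l.take (e+1)).count true
    set p := l.take (e+1) with hp
    have hchain : List.Chain' Stmt17.RFF p := (Stmt17.dyck_chain hn (M+1)).take (e+1)
    have hphead : p.head? = some true := by
      rw [hp, hr, List.take_succ_cons]
      rfl
    have hbound : p.count false ≤ p.count true :=
      Stmt17.chain_count p.length p le_rfl hchain (Or.inl hphead)
    have hplen : p.length = min (e+1) l.length := by
      rw [hp, List.length_take]
    have hsum : p.count true + p.count false = p.length := Stmt17.cTF p
    have hmul : 2 * p.count true ≤ n * p.count true := Nat.mul_le_mul_right _ hn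
    omega
  · -- vertical-side count fails
    have hepos : 0 < e := by omega
    have heLt : e < l.length := by omega
    have hseg : seg l e (l.length - 1) = l.drop e := by
      rw [seg]
      apply List.take_of_length_le
      rw [List.length_drop]
      omega
    have h2' : (Vset l).filter (fun i => e ≤ i ∧ i ≤ l.length - 1)
        = (Finset.range l.length).filter (fun i => l.getD i true = false ∧ e ≤ i) := by
      rw [Vset, Finset.filter_filter]
      refine Finset.filter_congr (fun x hx => ?_)
      simp only [Finset.mem_range] at hx
      constructor
      · rintro ⟨g1, g2, -⟩; exact ⟨g1, g2⟩
      · rintro ⟨g1, g2⟩; exact ⟨g1, g2, by omega⟩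
    have hcard : ((Vset l).filter (fun i => e ≤ i ∧ i ≤ l.length - 1)).card
        + (l.take e).count false = l.count false := by
      rw [h2']
      exact Stmt17.card_filter_ge l false true e (by omega)
    rw [hseg] at heq
    -- counts split
    have hsplitT : (l.take e).count true + (l.drop e).count true = l.count true := by
      conv_rhs => rw [← List.take_append_drop e l]
      rw [List.count_append]
    have hsplitF : (l.take e).count false + (l.drop e).count false = l.count false := by
      conv_rhs => rw [← List.take_append_drop e l]
      rw [List.count_append]
    have hP := Stmt17.dyck_P hn M e hepos (by rw [← hl2]; exact heLt)
    rw [← hl2] at hP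
    have hrec : uu n (M+2) + uu n M = n * uu n (M+1) :=
      Stmt17.uu_rec hn M
    set cardV := ((Vset l).filter (fun i => e ≤ i ∧ i ≤ l.length - 1)).card with hcv
    have hexp : n * cardV + n * (l.take e).count false
        = n * (cardV + (l.take e).count false) := by ring
    have hexp2 : n * (cardV + (l.take e).count false) = n * uu n (M+1) := by
      rw [hcard, hcF]
    omega
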